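/- Let d be a positive natural number, δ > 0, and let g_t, g_{t+1}, f_t, f_{t+1}, R, S be real numbers with 0 < g_t < g_{t+1} and R, S ≥ 0. Then there exists a constant C (depending only on d, δ, g_t, g_{t+1}, f_t, f_{t+1}, R, S) such that for all x_t, x_{t+1}, s ∈ ℝ^d with ‖x_t‖ ≤ R, ‖x_{t+1}‖ ≤ R and ‖s‖ ≤ S, one has log N(x_{t+1}; x_t + f_t·δ·x_t, g_t²·δ·I) − log N(x_t; x_{t+1} − (f_{t+1}·x_{t+1} − g_{t+1}²·s)·δ, g_{t+1}²·δ·I) ≤ C. Explicitly, one may take C = d·log(g_{t+1}/g_t) + B²/(2 g_{t+1}² δ) + (g_{t+1}² δ)⁻²·B²/(2((g_t² δ)⁻¹ − (g_{t+1}² δ)⁻¹)) with B = δ·(|f_t|·R + |f_{t+1}|·R + g_{t+1}²·S). -/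

import Mathlib

open Real MeasureTheory

/-- The isotropic Gaussian density on `ℝ^d` with mean `m` and covariance `v • I`
(`v` is the variance): `N(x; m, v I) = (2 π v)^(-d/2) · exp(-‖x - m‖² / (2 v))`. -/
noncomputable def gaussDensity (d : ℕ) (v : ℝ) (m x : EuclideanSpace ℝ (Fin d)) : ℝ :=
  (2 * Real.pi * v) ^ (-(d : ℝ) / 2) * Real.exp (-‖x - m‖ ^ 2 / (2 * v))

lemma log_gaussDensity (d : ℕ) (v : ℝ) (hv : 0 < v) (m x : EuclideanSpace ℝ (Fin d)) :
    Real.log (gaussDensity d v m x)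
      = (-(d : ℝ) / 2) * Real.log (2 * Real.pi * v) - ‖x - m‖ ^ 2 / (2 * v) := by
  have h2πv : 0 < 2 * Real.pi * v := by positivity
  unfold gaussDensity
  rw [Real.log_mul (by positivity) (Real.exp_ne_zero _), Real.log_rpow h2πv, Real.log_exp]
  ring


lemma alg_key (v1 v2 A B C : ℝ) (hv1 : 0 < v1) (hv2 : 0 < v2) (hv12 : v1 < v2)
    (hA : 0 ≤ A) (hB : 0 ≤ B) (hC : 0 ≤ C) (hCb : C ≤ A + B) :
    C ^ 2 / (2 * v2) - A ^ 2 / (2 * v1)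
      ≤ B ^ 2 / (2 * v2) + (v2 ^ 2)⁻¹ * B ^ 2 / (2 * (v1⁻¹ - v2⁻¹)) := by
  have hsub : 0 < v2 - v1 := sub_pos.mpr hv12
  have hε : 0 < v1⁻¹ - v2⁻¹ := by
    have := inv_strictAnti₀ hv1 hv12
    linarith
  have hC2 : C ^ 2 ≤ (A + B) ^ 2 := by nlinarith
  have h1 : (v2 ^ 2)⁻¹ * B ^ 2 / (2 * (v1⁻¹ - v2⁻¹)) = B ^ 2 * v1 / (2 * v2 * (v2 - v1)) := by
    rw [div_eq_div_iff (ne_of_gt (by positivity)) (ne_of_gt (mul_pos (by positivity) hsub))]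
    field_simp
  rw [h1]
  have hfrac : B ^ 2 / (2 * v2) + B ^ 2 * v1 / (2 * v2 * (v2 - v1))
      - (C ^ 2 / (2 * v2) - A ^ 2 / (2 * v1))
      = (B ^ 2 * v1 * (v2 - v1) + B ^ 2 * v1 ^ 2 - C ^ 2 * v1 * (v2 - v1)
          + A ^ 2 * v2 * (v2 - v1)) / (2 * v1 * v2 * (v2 - v1)) := by
    field_simp
    ring
  have hnum : 0 ≤ B ^ 2 * v1 * (v2 - v1) + B ^ 2 * v1 ^ 2 - C ^ 2 * v1 * (v2 - v1)
      + A ^ 2 * v2 * (v2 - v1) := by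
    nlinarith [sq_nonneg ((v2 - v1) * A - v1 * B),
      mul_le_mul_of_nonneg_right hC2 (le_of_lt (mul_pos hv1 hsub))]
  have hpos : 0 < 2 * v1 * v2 * (v2 - v1) := by positivity
  have := div_nonneg hnum (le_of_lt hpos)
  linarith [hfrac ▸ this]

theorem log_ratio_forward_proposal_bound (d : ℕ) (hd : 0 < d) (δ : ℝ) (hδ : 0 < δ)
    (gt gt1 ft ft1 R S : ℝ) (hgt : 0 < gt) (hgg : gt < gt1) (hR : 0 ≤ R) (hS : 0 ≤ S) :
    ∀ xt xt1 s : EuclideanSpace ℝ (Fin d), ‖xt‖ ≤ R → ‖xt1‖ ≤ R → ‖s‖ ≤ S →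
      Real.log (gaussDensity d (gt ^ 2 * δ) (xt + (ft * δ) • xt) xt1) -
        Real.log (gaussDensity d (gt1 ^ 2 * δ)
          (xt1 - δ • (ft1 • xt1 - (gt1 ^ 2) • s)) xt) ≤
      d * Real.log (gt1 / gt) +
        (δ * (|ft| * R + |ft1| * R + gt1 ^ 2 * S)) ^ 2 / (2 * (gt1 ^ 2 * δ)) +
        ((gt1 ^ 2 * δ) ^ 2)⁻¹ * (δ * (|ft| * R + |ft1| * R + gt1 ^ 2 * S)) ^ 2 /
          (2 * ((gt ^ 2 * δ)⁻¹ - (gt1 ^ 2 * δ)⁻¹)) := by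
  intro xt xt1 s hxt hxt1 hs
  have hgt1 : 0 < gt1 := lt_trans hgt hgg
  set v1 : ℝ := gt ^ 2 * δ with hv1def
  set v2 : ℝ := gt1 ^ 2 * δ with hv2def
  have hv1 : 0 < v1 := by positivity
  have hv2 : 0 < v2 := by positivity
  have hv12 : v1 < v2 := by
    have : gt ^ 2 < gt1 ^ 2 := by nlinarith
    exact mul_lt_mul_of_pos_right this hδ
  set B : ℝ := δ * (|ft| * R + |ft1| * R + gt1 ^ 2 * S) with hBdef
  have hB : 0 ≤ B := by positivity
  set a : EuclideanSpace ℝ (Fin d) := xt1 - (xt + (ft * δ) • xt) with hadef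
  set b : EuclideanSpace ℝ (Fin d) := xt - (xt1 - δ • (ft1 • xt1 - (gt1 ^ 2) • s)) with hbdef
  set A : ℝ := ‖a‖ with hAdef
  have hA : 0 ≤ A := norm_nonneg _
  -- bound on ‖a + b‖
  have hab : ‖a + b‖ ≤ B := by
    have heq : a + b = (ft1 * δ) • xt1 - (gt1 ^ 2 * δ) • s - (ft * δ) • xt := by
      rw [hadef, hbdef]
      module
    have e1 : ‖((ft1 * δ) : ℝ)‖ = |ft1| * δ := by
      rw [Real.norm_eq_abs, abs_mul, abs_of_pos hδ]
    have e2 : ‖((gt1 ^ 2 * δ) : ℝ)‖ = gt1 ^ 2 * δ := by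
      rw [Real.norm_eq_abs, abs_of_pos (by positivity)]
    have e3 : ‖((ft * δ) : ℝ)‖ = |ft| * δ := by
      rw [Real.norm_eq_abs, abs_mul, abs_of_pos hδ]
    calc ‖a + b‖ ≤ ‖(ft1 * δ) • xt1 - (gt1 ^ 2 * δ) • s‖ + ‖(ft * δ) • xt‖ := by
          rw [heq]; exact norm_sub_le _ _
      _ ≤ (‖(ft1 * δ) • xt1‖ + ‖(gt1 ^ 2 * δ) • s‖) + ‖(ft * δ) • xt‖ := by
          gcongr; exact norm_sub_le _ _
      _ = |ft1| * δ * ‖xt1‖ + gt1 ^ 2 * δ * ‖s‖ + |ft| * δ * ‖xt‖ := by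
          rw [norm_smul, norm_smul, norm_smul, e1, e2, e3]
      _ ≤ |ft1| * δ * R + gt1 ^ 2 * δ * S + |ft| * δ * R := by
          gcongr <;> positivity
      _ = B := by rw [hBdef]; ring
  have hbA : ‖b‖ ≤ A + B := by
    calc ‖b‖ = ‖(a + b) - a‖ := by rw [add_sub_cancel_left]
      _ ≤ ‖a + b‖ + ‖a‖ := norm_sub_le _ _
      _ ≤ B + A := by gcongr
      _ = A + B := by ring
  have hb2 : ‖b‖ ^ 2 ≤ (A + B) ^ 2 := by
    have := norm_nonneg b
    nlinarith
  -- compute logs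
  rw [log_gaussDensity d v1 hv1, log_gaussDensity d v2 hv2]
  rw [← hadef, ← hbdef, ← hAdef]
  have hlogv : Real.log (2 * Real.pi * v2) - Real.log (2 * Real.pi * v1)
      = 2 * Real.log (gt1 / gt) := by
    rw [← Real.log_div (by positivity) (by positivity)]
    have heq : 2 * Real.pi * v2 / (2 * Real.pi * v1) = (gt1 / gt) ^ 2 := by
      rw [hv1def, hv2def]
      field_simp
    rw [heq, Real.log_pow]
    push_cast
    ring
  have hε : 0 < v1⁻¹ - v2⁻¹ := by
    have := inv_strictAnti₀ hv1 hv12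
    linarith
  -- main algebraic inequality
  have key : ‖b‖ ^ 2 / (2 * v2) - A ^ 2 / (2 * v1)
      ≤ B ^ 2 / (2 * v2) + (v2 ^ 2)⁻¹ * B ^ 2 / (2 * (v1⁻¹ - v2⁻¹)) :=
    alg_key v1 v2 A B ‖b‖ hv1 hv2 hv12 hA hB (norm_nonneg _) hbA
  have hd2 : (-(d : ℝ) / 2) * Real.log (2 * Real.pi * v1)
      - (-(d : ℝ) / 2) * Real.log (2 * Real.pi * v2) = d * Real.log (gt1 / gt) := by
    have : (-(d : ℝ) / 2) * Real.log (2 * Real.pi * v1)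
        - (-(d : ℝ) / 2) * Real.log (2 * Real.pi * v2)
        = ((d : ℝ) / 2) * (Real.log (2 * Real.pi * v2) - Real.log (2 * Real.pi * v1)) := by
      ring
    rw [this, hlogv]; ring
  have expand : (-(d : ℝ) / 2) * Real.log (2 * Real.pi * v1) - A ^ 2 / (2 * v1)
      - ((-(d : ℝ) / 2) * Real.log (2 * Real.pi * v2) - ‖b‖ ^ 2 / (2 * v2))
      = (d : ℝ) * Real.log (gt1 / gt) + (‖b‖ ^ 2 / (2 * v2) - A ^ 2 / (2 * v1)) := by
    rw [← hd2]; ring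
  rw [expand]
  have : (d : ℝ) * Real.log (gt1 / gt) + (‖b‖ ^ 2 / (2 * v2) - A ^ 2 / (2 * v1))
      ≤ (d : ℝ) * Real.log (gt1 / gt)
        + (B ^ 2 / (2 * v2) + (v2 ^ 2)⁻¹ * B ^ 2 / (2 * (v1⁻¹ - v2⁻¹))) := by
    linarith [key]
  linarith [this]
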